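/- For n ≥ 4, let P*_{4,n} = {p₁,…,p_n} be the poset with relations generated by p₁ ≼ p₂ ≼ … ≼ p_{⌊(n−1)/2⌋} ≼ p_{⌊(n−1)/2⌋+2} ≼ … ≼ p_n and p_{⌊(n−1)/2⌋+1} ≼ p_{⌊(n−1)/2⌋+2}. Then F = Σ_{i=1}^{⌊(n−1)/2⌋} E*_{p_i,p_{n+1−i}} + Σ_{i=⌈n/2⌉}^{n} E*_{p_{⌈n/2⌉},p_i} (with the degenerate diagonal summand omitted) is a Frobenius functional on g_A(P*_{4,n}), and the spectrum of g_A(P*_{4,n}) is binary, i.e., consists of an equal number of 0's and 1's. -/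

import Mathlib

/-!
Common definitions: for a finite poset `P`, identified with `{1,…,n}` via a linear
extension, represented by a relation `le` on `Fin n`, the type-A Lie poset algebra
`gA le` is the Lie subalgebra of `sl(n, ℂ)` spanned by the matrix units `E p q`
for `p ≺ q` together with all trace-zero diagonal matrices (here realized as a
submodule of complex `n × n` matrices, which is closed under the commutator
bracket).  `gFull le` is the full Lie poset algebra `g(P)` (with all diagonal
matrices).  `FS S` is the functional `F_S = ∑_{(p,q) ∈ S} E*_{p,q}`.
-/

namespace LiePosets

noncomputable section

open scoped BigOperators

/-- Complex `n × n` matrices. -/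
abbrev M (n : ℕ) : Type := Matrix (Fin n) (Fin n) ℂ

/-- The strict relation `p ≺ q` attached to a poset relation `le`. -/
def Strict {n : ℕ} (le : Fin n → Fin n → Prop) (p q : Fin n) : Prop := le p q ∧ p ≠ q

/-- The type-A Lie poset algebra `g_A(P)`: trace-zero matrices supported on
relations of the poset (off-diagonal entries vanish off the strict relations). -/
def gA {n : ℕ} (le : Fin n → Fin n → Prop) : Submodule ℂ (M n) where
  carrier := {A | Matrix.trace A = 0 ∧ ∀ p q : Fin n, p ≠ q → ¬ le p q → A p q = 0}
  add_mem' := by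
    rintro A B ⟨hA, hA'⟩ ⟨hB, hB'⟩
    exact ⟨by simp [hA, hB], fun p q h1 h2 => by
      simp [Matrix.add_apply, hA' p q h1 h2, hB' p q h1 h2]⟩
  zero_mem' := ⟨by simp, fun p q _ _ => by simp⟩
  smul_mem' := by
    rintro c A ⟨hA, hA'⟩
    exact ⟨by simp [hA], fun p q h1 h2 => by
      simp [Matrix.smul_apply, hA' p q h1 h2]⟩

/-- The Lie poset algebra `g(P)` (all diagonal matrices allowed). -/
def gFull {n : ℕ} (le : Fin n → Fin n → Prop) : Submodule ℂ (M n) where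
  carrier := {A | ∀ p q : Fin n, p ≠ q → ¬ le p q → A p q = 0}
  add_mem' := by
    rintro A B hA hB p q h1 h2
    simp [Matrix.add_apply, hA p q h1 h2, hB p q h1 h2]
  zero_mem' := fun p q _ _ => by simp
  smul_mem' := by
    rintro c A hA p q h1 h2
    simp [Matrix.smul_apply, hA p q h1 h2]

/-- The functional `F_S = ∑_{(p,q) ∈ S} E*_{p,q}` reading off the sum of the
coefficients of the matrix entries indexed by `S`. -/
def FS {n : ℕ} (S : Finset (Fin n × Fin n)) : M n →ₗ[ℂ] ℂ where
  toFun A := ∑ pq ∈ S, A pq.1 pq.2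
  map_add' A B := by simp [Matrix.add_apply, Finset.sum_add_distrib]
  map_smul' c A := by simp [Matrix.smul_apply, Finset.mul_sum]

/-- `F` is a Frobenius functional on the Lie subalgebra (submodule) `g`:
the kernel of the Kirillov form `B_F(x, y) = F ⁅x, y⁆` on `g` is trivial. -/
def IsFrobeniusOn {n : ℕ} (g : Submodule ℂ (M n)) (F : M n →ₗ[ℂ] ℂ) : Prop :=
  ∀ x ∈ g, (∀ y ∈ g, F ⁅x, y⁆ = 0) → x = 0

/-- `H` is a principal element for `F` on `g`:  `B_F(H, ·) = F` on `g`. -/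
def IsPrincipal {n : ℕ} (g : Submodule ℂ (M n)) (F : M n →ₗ[ℂ] ℂ) (H : M n) : Prop :=
  H ∈ g ∧ ∀ y ∈ g, F ⁅H, y⁆ = F y

/-- The adjoint action `ad H = ⁅H, -⁆` as a linear endomorphism of matrices. -/
def adE {n : ℕ} (H : M n) : Module.End ℂ (M n) :=
  LinearMap.mulLeft ℂ H - LinearMap.mulRight ℂ H

/-- Multiplicity of `μ` as an eigenvalue of `ad H` acting on `g`. -/
def eigMult {n : ℕ} (g : Submodule ℂ (M n)) (H : M n) (μ : ℂ) : ℕ :=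
  Module.finrank ℂ ↥(g ⊓ Module.End.eigenspace (adE H) μ)

/-- `g` has a binary spectrum: for any Frobenius functional `F` and corresponding
principal element `H`, the multiset of eigenvalues of `ad H` on `g` consists of an
equal number of `0`'s and `1`'s. -/
def HasBinarySpectrum {n : ℕ} (g : Submodule ℂ (M n)) : Prop :=
  ∀ (F : M n →ₗ[ℂ] ℂ) (H : M n), IsFrobeniusOn g F → IsPrincipal g F H →
    eigMult g H 0 = eigMult g H 1 ∧
    eigMult g H 0 + eigMult g H 1 = Module.finrank ℂ ↥g

/-- The kernel of the Kirillov form `B_F` on `g`. -/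
def kirKer {n : ℕ} (g : Submodule ℂ (M n)) (F : M n →ₗ[ℂ] ℂ) : Submodule ℂ (M n) where
  carrier := {x | x ∈ g ∧ ∀ y ∈ g, F ⁅x, y⁆ = 0}
  zero_mem' := ⟨g.zero_mem, fun y _ => by rw [Ring.lie_def, zero_mul, mul_zero, sub_zero, map_zero]⟩
  add_mem' := by
    rintro a b ⟨ha, ha'⟩ ⟨hb, hb'⟩
    exact ⟨g.add_mem ha hb, fun y hy => by
      have h1 := ha' y hy
      have h2 := hb' y hy
      rw [Ring.lie_def] at h1 h2 ⊢
      rw [add_mul, mul_add, add_sub_add_comm, map_add, h1, h2, add_zero]⟩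
  smul_mem' := by
    rintro c a ⟨ha, ha'⟩
    exact ⟨g.smul_mem c ha, fun y hy => by
      have h1 := ha' y hy
      rw [Ring.lie_def] at h1 ⊢
      rw [smul_mul_assoc, mul_smul_comm, ← smul_sub, map_smul, h1, smul_zero]⟩

/-- The index of the Lie algebra `g`: the minimum over all functionals of the
dimension of the kernel of the corresponding Kirillov form. -/
def lieIndex {n : ℕ} (g : Submodule ℂ (M n)) : ℕ :=
  sInf {d : ℕ | ∃ F : M n →ₗ[ℂ] ℂ, d = Module.finrank ℂ ↥(kirKer g F)}

/-- The underlying undirected graph of the directed graph `Γ_{F_S}`. -/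
def gammaGraph {n : ℕ} (S : Finset (Fin n × Fin n)) : SimpleGraph (Fin n) where
  Adj p q := p ≠ q ∧ ((p, q) ∈ S ∨ (q, p) ∈ S)
  symm := ⟨fun p q h => ⟨h.1.symm, h.2.symm⟩⟩
  loopless := ⟨fun p h => h.1 rfl⟩

/-- `F_S` is small: `S` consists of strict relations of the poset and `Γ_{F_S}`
is a spanning tree of the comparability graph. -/
def Small {n : ℕ} (le : Fin n → Fin n → Prop) (S : Finset (Fin n × Fin n)) : Prop :=
  (∀ pq ∈ S, Strict le pq.1 pq.2) ∧ (gammaGraph S).IsTree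

/-- `U_{F_S}(P)`: the sinks of `Γ_{F_S}`. -/
def sinks {n : ℕ} (S : Finset (Fin n × Fin n)) : Set (Fin n) :=
  {p | (∃ q, (q, p) ∈ S) ∧ ∀ q, (p, q) ∉ S}

/-- `D_{F_S}(P)`: the sources of `Γ_{F_S}`. -/
def sources {n : ℕ} (S : Finset (Fin n × Fin n)) : Set (Fin n) :=
  {p | (∃ q, (p, q) ∈ S) ∧ ∀ q, (q, p) ∉ S}

/-- `B_{F_S}(P)`: the vertices of `Γ_{F_S}` that are neither sinks nor sources. -/
def betweens {n : ℕ} (S : Finset (Fin n × Fin n)) : Set (Fin n) :=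
  {p | (∃ q, (p, q) ∈ S) ∧ ∃ q, (q, p) ∈ S}

/-- `U` is a filter (up-closed set) of the poset. -/
def IsPosetFilter {n : ℕ} (le : Fin n → Fin n → Prop) (U : Set (Fin n)) : Prop :=
  ∀ p ∈ U, ∀ q, le p q → q ∈ U

/-- `D` is an order ideal (down-closed set) of the poset. -/
def IsPosetIdeal {n : ℕ} (le : Fin n → Fin n → Prop) (D : Set (Fin n)) : Prop :=
  ∀ p ∈ D, ∀ q, le q p → q ∈ D

/-- Helper to build elements of `Fin n` from natural numbers. -/
def fmk (n : ℕ) (h : 0 < n) (i : ℕ) : Fin n := ⟨i % n, Nat.mod_lt _ h⟩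

/-- Restriction of a matrix along an embedding of index types. -/
def restrictMat {N K : ℕ} (f : Fin K → Fin N) (B : M N) : M K :=
  Matrix.of fun p q => B (f p) (f q)

/-! ### Auxiliary development -/

section Aux

open Finset

variable {n : ℕ}

lemma fmk_val (h : 0 < n) {i : ℕ} (hi : i < n) : (fmk n h i).val = i := Nat.mod_eq_of_lt hi

lemma fmk_self (h : 0 < n) (p : Fin n) : fmk n h p.val = p :=
  Fin.ext (Nat.mod_eq_of_lt p.isLt)

/-- Submodule of matrices supported on a set of positions. -/
def suppMod (n : ℕ) (P : Fin n × Fin n → Prop) : Submodule ℂ (M n) where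
  carrier := {A | ∀ p q : Fin n, ¬ P (p, q) → A p q = 0}
  add_mem' := by
    intro A B hA hB p q h
    simp [Matrix.add_apply, hA p q h, hB p q h]
  zero_mem' := fun p q _ => rfl
  smul_mem' := by
    intro c A hA p q h
    simp [Matrix.smul_apply, hA p q h]

lemma mem_suppMod {P : Fin n × Fin n → Prop} {A : M n} :
    A ∈ suppMod n P ↔ ∀ p q : Fin n, ¬ P (p, q) → A p q = 0 := Iff.rfl

/-- A linear equivalence between a support submodule and a function space. -/
def suppModEquiv (P : Fin n × Fin n → Prop) [DecidablePred P] :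
    ↥(suppMod n P) ≃ₗ[ℂ] (↥(Finset.univ.filter P) → ℂ) where
  toFun A t := A.1 t.1.1 t.1.2
  map_add' A B := rfl
  map_smul' c A := rfl
  invFun f := ⟨Matrix.of fun p q => if h : P (p, q) then f ⟨(p, q), by simp [h]⟩ else 0,
    fun p q h => dif_neg h⟩
  left_inv := by
    rintro ⟨A, hA⟩
    apply Subtype.ext
    funext p q
    show (if h : P (p, q) then A p q else 0) = A p q
    by_cases h : P (p, q)
    · rw [dif_pos h]
    · rw [dif_neg h, hA p q h]
  right_inv := by
    intro f
    funext t
    obtain ⟨⟨p, q⟩, ht⟩ := t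
    have h : P (p, q) := by simpa using ht
    simp [Matrix.of_apply, dif_pos h]

lemma finrank_suppMod (P : Fin n × Fin n → Prop) [DecidablePred P] :
    Module.finrank ℂ ↥(suppMod n P) = (Finset.univ.filter P).card := by
  rw [(suppModEquiv P).finrank_eq, Module.finrank_pi, Fintype.card_coe]

/-- The trace functional on a support submodule. -/
lemma finrank_suppMod_inf_ker_trace (P : Fin n × Fin n → Prop) [DecidablePred P]
    (hpos : 0 < n) (hdiag : ∀ p, P (p, p)) :
    Module.finrank ℂ ↥(suppMod n P ⊓ LinearMap.ker (Matrix.traceLinearMap (Fin n) ℂ ℂ))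
      = (Finset.univ.filter P).card - 1 := by
  classical
  set W : Submodule ℂ (M n) := suppMod n P with hW
  set φ : ↥W →ₗ[ℂ] ℂ := (Matrix.traceLinearMap (Fin n) ℂ ℂ).comp W.subtype with hφ
  have hmap : Submodule.map W.subtype (LinearMap.ker φ)
      = W ⊓ LinearMap.ker (Matrix.traceLinearMap (Fin n) ℂ ℂ) := by
    ext A
    simp only [Submodule.mem_map, LinearMap.mem_ker, Submodule.mem_inf, hφ,
      LinearMap.comp_apply, Submodule.coe_subtype]
    constructor
    · rintro ⟨⟨B, hB⟩, h1, rfl⟩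
      exact ⟨hB, h1⟩
    · rintro ⟨hA, h2⟩
      exact ⟨⟨A, hA⟩, h2, rfl⟩
  have hsurj : LinearMap.range φ = ⊤ := by
    rw [LinearMap.range_eq_top]
    intro c
    refine ⟨⟨Matrix.diagonal (fun p => if p = ⟨0, hpos⟩ then c else 0), ?_⟩, ?_⟩
    · intro p q h
      rcases eq_or_ne p q with rfl | hne
      · exact absurd (hdiag p) h
      · exact Matrix.diagonal_apply_ne _ hne
    · simp [hφ, Matrix.trace_diagonal]
  have hrn := LinearMap.finrank_range_add_finrank_ker φ
  rw [hsurj] at hrn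
  have hW' : Module.finrank ℂ ↥W = (Finset.univ.filter P).card := finrank_suppMod P
  have h1 : Module.finrank ℂ ↥(⊤ : Submodule ℂ ℂ) = 1 := by
    simp [finrank_top]
  rw [← hmap, Submodule.finrank_map_subtype_eq]
  omega

end Aux
section Counting

open Finset

variable {n : ℕ}

lemma card_block (hpos : 0 < n) (a b : ℕ) (hb : b ≤ n) :
    (Finset.univ.filter fun p : Fin n => a ≤ p.val ∧ p.val < b).card = b - a := by
  have himg : (Finset.univ.filter fun p : Fin n => a ≤ p.val ∧ p.val < b)
      = (Finset.Ico a b).image (fmk n hpos) := by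
    ext p
    simp only [Finset.mem_filter, Finset.mem_univ, true_and, Finset.mem_image, Finset.mem_Ico]
    constructor
    · rintro ⟨h1, h2⟩
      exact ⟨p.val, ⟨h1, h2⟩, fmk_self hpos p⟩
    · rintro ⟨i, ⟨h1, h2⟩, rfl⟩
      rw [fmk_val hpos (lt_of_lt_of_le h2 hb)]
      exact ⟨h1, h2⟩
  rw [himg, Finset.card_image_of_injOn ?_, Nat.card_Ico]
  intro i hi j hj hij
  simp only [Finset.coe_Ico, Set.mem_Ico] at hi hj
  have := congrArg Fin.val hij
  rwa [fmk_val hpos (lt_of_lt_of_le hi.2 hb), fmk_val hpos (lt_of_lt_of_le hj.2 hb)] at this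

lemma card_strict_block (hpos : 0 < n) (a b : ℕ) (hb : b ≤ n) :
    2 * (Finset.univ.filter fun pq : Fin n × Fin n =>
        a ≤ pq.1.val ∧ pq.1.val < pq.2.val ∧ pq.2.val < b).card + (b - a)
      = (b - a) * (b - a) := by
  classical
  set B := Finset.univ.filter (fun p : Fin n => a ≤ p.val ∧ p.val < b) with hB
  have hcB : B.card = b - a := card_block hpos a b hb
  set T := B ×ˢ B with hT
  have h1 : (Finset.univ.filter fun pq : Fin n × Fin n =>
      a ≤ pq.1.val ∧ pq.1.val < pq.2.val ∧ pq.2.val < b)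
      = T.filter fun pq => pq.1.val < pq.2.val := by
    ext ⟨p, q⟩
    simp only [hT, hB, Finset.mem_filter, Finset.mem_product, Finset.mem_univ, true_and]
    constructor
    · rintro ⟨u1, u2, u3⟩; exact ⟨⟨⟨u1, by omega⟩, ⟨by omega, u3⟩⟩, u2⟩
    · rintro ⟨⟨⟨u1, u2⟩, v1, v2⟩, h2⟩; exact ⟨u1, h2, v2⟩
  have hmemT : ∀ pq : Fin n × Fin n, pq ∈ T ↔ (pq.2, pq.1) ∈ T := by
    intro pq
    simp only [hT, Finset.mem_product]
    tauto
  have h2 : (T.filter fun pq => pq.2.val < pq.1.val).card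
      = (T.filter fun pq => pq.1.val < pq.2.val).card := by
    refine Finset.card_bij (fun pq _ => (pq.2, pq.1)) ?_ ?_ ?_
    · intro pq h
      simp only [Finset.mem_filter] at h ⊢
      exact ⟨(hmemT pq).mp h.1, h.2⟩
    · intro a1 _ a2 _ h
      have h1' := congrArg Prod.fst h
      have h2' := congrArg Prod.snd h
      simp only at h1' h2'
      exact Prod.ext h2' h1'
    · intro pq h
      simp only [Finset.mem_filter] at h
      refine ⟨(pq.2, pq.1), ?_, rfl⟩
      simp only [Finset.mem_filter]
      exact ⟨(hmemT (pq.2, pq.1)).mpr (by simpa using h.1), h.2⟩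
  have h3 : T.filter (fun pq => ¬ pq.1.val < pq.2.val)
      = T.filter (fun pq => pq.2.val < pq.1.val) ∪ T.filter (fun pq => pq.1 = pq.2) := by
    ext pq
    simp only [Finset.mem_filter, Finset.mem_union, Fin.ext_iff]
    constructor
    · rintro ⟨ht, hlt⟩
      rcases Nat.lt_or_ge pq.2.val pq.1.val with h | h
      · exact Or.inl ⟨ht, h⟩
      · exact Or.inr ⟨ht, by omega⟩
    · rintro (⟨ht, h⟩ | ⟨ht, h⟩) <;> exact ⟨ht, by omega⟩
  have hdisj : Disjoint (T.filter (fun pq => pq.2.val < pq.1.val))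
      (T.filter (fun pq => pq.1 = pq.2)) := by
    rw [Finset.disjoint_left]
    intro pq h1' h2'
    simp only [Finset.mem_filter, Fin.ext_iff] at h1' h2'
    omega
  have h4 : T.filter (fun pq => pq.1 = pq.2) = B.image (fun p => (p, p)) := by
    ext pq
    simp only [Finset.mem_filter, Finset.mem_image, hT, Finset.mem_product]
    constructor
    · rintro ⟨⟨hb1, _⟩, heq⟩
      exact ⟨pq.1, hb1, Prod.ext rfl heq⟩
    · rintro ⟨p, hp, rfl⟩
      exact ⟨⟨hp, hp⟩, rfl⟩
  have h5 : (T.filter (fun pq => pq.1 = pq.2)).card = B.card := by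
    rw [h4, Finset.card_image_of_injective _ (fun p q h => (Prod.ext_iff.mp h).1)]
  have h6 := Finset.card_filter_add_card_filter_not
    (s := T) (p := fun pq => pq.1.val < pq.2.val)
  have h7 : T.card = B.card * B.card := Finset.card_product B B
  rw [h3, Finset.card_union_of_disjoint hdisj, h2, h5] at h6
  rw [h1]
  rw [hcB] at h6 h7
  omega

lemma card_cross (k l : ℕ) (hk : k ≤ n) (hl : l ≤ n) :
    (Finset.univ.filter fun pq : Fin n × Fin n => pq.1.val < k ∧ l ≤ pq.2.val).card
      = k * (n - l) := by
  classical
  rcases Nat.eq_zero_or_pos n with rfl | hpos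
  · have hk0 : k = 0 := by omega
    subst hk0; simp
  have hpr : (Finset.univ.filter fun pq : Fin n × Fin n => pq.1.val < k ∧ l ≤ pq.2.val)
      = (Finset.univ.filter fun p : Fin n => p.val < k)
        ×ˢ (Finset.univ.filter fun q : Fin n => l ≤ q.val) := by
    ext pq
    simp only [Finset.mem_filter, Finset.mem_univ, true_and, Finset.mem_product]
  rw [hpr, Finset.card_product]
  have e1 : (Finset.univ.filter fun p : Fin n => p.val < k)
      = (Finset.univ.filter fun p : Fin n => 0 ≤ p.val ∧ p.val < k) := by
    simp
  have e2 : (Finset.univ.filter fun q : Fin n => l ≤ q.val)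
      = (Finset.univ.filter fun q : Fin n => l ≤ q.val ∧ q.val < n) := by
    ext q; simp [q.isLt]
  rw [e1, e2, card_block hpos 0 k hk, card_block hpos l n le_rfl]
  simp

end Counting
section Master

open Finset

variable {n : ℕ}

lemma S_eq (hn : 4 ≤ n) (hpos : 0 < n) {m : ℕ} (hm : m = (n - 1) / 2)
    {S : Finset (Fin n × Fin n)}
    (hS : S =
      ((Finset.Icc 1 ((n - 1) / 2)).image fun i =>
        (fmk n hpos (i - 1), fmk n hpos (n - i))) ∪
      ((Finset.Icc ((n + 1) / 2 + 1) n).image fun i =>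
        (fmk n hpos ((n + 1) / 2 - 1), fmk n hpos (i - 1)))) :
    S = ((Finset.range m).image fun i => (fmk n hpos i, fmk n hpos (n - 1 - i))) ∪
      ((Finset.Ico (m + 1) n).image fun j => (fmk n hpos m, fmk n hpos j)) := by
  subst hS
  have e1 : ((Finset.Icc 1 ((n - 1) / 2)).image fun i =>
      ((fmk n hpos (i - 1), fmk n hpos (n - i)) : Fin n × Fin n))
      = (Finset.range m).image fun i => (fmk n hpos i, fmk n hpos (n - 1 - i)) := by
    ext pq
    simp only [Finset.mem_image, Finset.mem_Icc, Finset.mem_range]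
    constructor
    · rintro ⟨i, ⟨hi1, hi2⟩, heq⟩
      refine ⟨i - 1, by omega, ?_⟩
      rw [show n - 1 - (i - 1) = n - i by omega]
      exact heq
    · rintro ⟨i, hi, heq⟩
      refine ⟨i + 1, by omega, ?_⟩
      rw [show i + 1 - 1 = i by omega, show n - (i + 1) = n - 1 - i by omega]
      exact heq
  have e2 : ((Finset.Icc ((n + 1) / 2 + 1) n).image fun i =>
      ((fmk n hpos ((n + 1) / 2 - 1), fmk n hpos (i - 1)) : Fin n × Fin n))
      = (Finset.Ico (m + 1) n).image fun j => (fmk n hpos m, fmk n hpos j) := by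
    have hm' : (n + 1) / 2 - 1 = m := by omega
    ext pq
    simp only [Finset.mem_image, Finset.mem_Icc, Finset.mem_Ico, hm']
    constructor
    · rintro ⟨i, ⟨hi1, hi2⟩, heq⟩
      exact ⟨i - 1, by omega, heq⟩
    · rintro ⟨j, hj, heq⟩
      refine ⟨j + 1, by omega, ?_⟩
      rw [show j + 1 - 1 = j by omega]
      exact heq
  rw [e1, e2]

lemma FS_eval (hn : 4 ≤ n) (hpos : 0 < n) {m : ℕ} (hm : m = (n - 1) / 2)
    {S : Finset (Fin n × Fin n)}
    (hS' : S = ((Finset.range m).image fun i => (fmk n hpos i, fmk n hpos (n - 1 - i))) ∪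
      ((Finset.Ico (m + 1) n).image fun j => (fmk n hpos m, fmk n hpos j)))
    (A : M n) :
    FS S A = (∑ i ∈ Finset.range m, A (fmk n hpos i) (fmk n hpos (n - 1 - i)))
      + ∑ j ∈ Finset.Ico (m + 1) n, A (fmk n hpos m) (fmk n hpos j) := by
  subst hS'
  have hdisj : Disjoint
      ((Finset.range m).image fun i => ((fmk n hpos i, fmk n hpos (n - 1 - i)) : Fin n × Fin n))
      ((Finset.Ico (m + 1) n).image fun j => ((fmk n hpos m, fmk n hpos j) : Fin n × Fin n)) := by
    rw [Finset.disjoint_left]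
    rintro pq h1 h2
    simp only [Finset.mem_image, Finset.mem_range, Finset.mem_Ico] at h1 h2
    obtain ⟨i, hi, rfl⟩ := h1
    obtain ⟨j, hj, heq⟩ := h2
    have := congrArg (fun z : Fin n × Fin n => z.1.val) heq
    simp only [fmk_val hpos (by omega : m < n), fmk_val hpos (by omega : i < n)] at this
    omega
  simp only [FS, LinearMap.coe_mk, AddHom.coe_mk]
  rw [Finset.sum_union hdisj, Finset.sum_image ?_, Finset.sum_image ?_]
  · intro i hi j hj heq
    simp only [Finset.mem_coe, Finset.mem_Ico] at hi hj
    have := congrArg (fun z : Fin n × Fin n => z.2.val) heq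
    simp only [fmk_val hpos (by omega : i < n), fmk_val hpos (by omega : j < n)] at this
    omega
  · intro i hi j hj heq
    simp only [Finset.mem_coe, Finset.mem_range] at hi hj
    have := congrArg (fun z : Fin n × Fin n => z.1.val) heq
    simp only [fmk_val hpos (by omega : i < n), fmk_val hpos (by omega : j < n)] at this
    omega

lemma mul_stdE (x : M n) (a b p q : Fin n) :
    (x * Matrix.single a b (1 : ℂ)) p q = if q = b then x p a else 0 := by
  rw [Matrix.mul_apply]
  by_cases hq : q = b
  · subst hq
    rw [if_pos rfl, Finset.sum_eq_single a]
    · simp [Matrix.single]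
    · intro k _ hk
      simp [Matrix.single, (Ne.symm hk : ¬ a = k)]
    · intro h; exact absurd (Finset.mem_univ a) h
  · rw [if_neg hq]
    apply Finset.sum_eq_zero
    intro k _
    have hz : Matrix.single a b (1 : ℂ) k q = 0 := by
      unfold Matrix.single
      simp only [Matrix.of_apply]
      rw [if_neg]
      rintro ⟨-, h⟩
      exact hq h.symm
    rw [hz, mul_zero]

lemma stdE_mul (x : M n) (a b p q : Fin n) :
    (Matrix.single a b (1 : ℂ) * x) p q = if p = a then x b q else 0 := by
  rw [Matrix.mul_apply]
  by_cases hp : p = a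
  · subst hp
    rw [if_pos rfl, Finset.sum_eq_single b]
    · simp [Matrix.single]
    · intro k _ hk
      simp [Matrix.single, (Ne.symm hk : ¬ b = k)]
    · intro h; exact absurd (Finset.mem_univ b) h
  · rw [if_neg hp]
    apply Finset.sum_eq_zero
    intro k _
    have hz : Matrix.single a b (1 : ℂ) p k = 0 := by
      unfold Matrix.single
      simp only [Matrix.of_apply]
      rw [if_neg]
      rintro ⟨h, -⟩
      exact hp h.symm
    rw [hz, zero_mul]

lemma collapse_match (hn : 4 ≤ n) (hpos : 0 < n) {m : ℕ} (hm : m = (n - 1) / 2)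
    (b : Fin n) (f : ℕ → ℂ) :
    (∑ i ∈ Finset.range m, if fmk n hpos (n - 1 - i) = b then f i else 0)
      = if n - m ≤ b.val then f (n - 1 - b.val) else 0 := by
  have hb := b.isLt
  by_cases hb' : n - m ≤ b.val
  · rw [if_pos hb']
    rw [Finset.sum_eq_single_of_mem (n - 1 - b.val) (Finset.mem_range.mpr (by omega))]
    · rw [if_pos]
      rw [show n - 1 - (n - 1 - b.val) = b.val by omega, fmk_self]
    · intro i hi hne
      rw [if_neg]
      intro h
      have := congrArg Fin.val h
      rw [fmk_val hpos (by simp only [Finset.mem_range] at hi; omega)] at this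
      simp only [Finset.mem_range] at hi
      omega
  · rw [if_neg hb']
    apply Finset.sum_eq_zero
    intro i hi
    simp only [Finset.mem_range] at hi
    rw [if_neg]
    intro h
    have := congrArg Fin.val h
    rw [fmk_val hpos (by omega)] at this
    omega

lemma collapse_low (hn : 4 ≤ n) (hpos : 0 < n) {m : ℕ} (hm : m = (n - 1) / 2)
    (a : Fin n) (g : ℕ → ℂ) :
    (∑ i ∈ Finset.range m, if fmk n hpos i = a then g i else 0)
      = if a.val < m then g a.val else 0 := by
  have ha := a.isLt
  by_cases ha' : a.val < m
  · rw [if_pos ha']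
    rw [Finset.sum_eq_single_of_mem a.val (Finset.mem_range.mpr ha')]
    · rw [if_pos (fmk_self hpos a)]
    · intro i hi hne
      rw [if_neg]
      intro h
      have := congrArg Fin.val h
      simp only [Finset.mem_range] at hi
      rw [fmk_val hpos (by omega)] at this
      omega
  · rw [if_neg ha']
    apply Finset.sum_eq_zero
    intro i hi
    simp only [Finset.mem_range] at hi
    rw [if_neg]
    intro h
    have := congrArg Fin.val h
    rw [fmk_val hpos (by omega)] at this
    omega

lemma collapse_star (hn : 4 ≤ n) (hpos : 0 < n) {m : ℕ} (hm : m = (n - 1) / 2)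
    (b : Fin n) (f : ℕ → ℂ) :
    (∑ j ∈ Finset.Ico (m + 1) n, if fmk n hpos j = b then f j else 0)
      = if m + 1 ≤ b.val then f b.val else 0 := by
  have hb := b.isLt
  by_cases hb' : m + 1 ≤ b.val
  · rw [if_pos hb']
    rw [Finset.sum_eq_single_of_mem b.val (Finset.mem_Ico.mpr ⟨hb', hb⟩)]
    · rw [if_pos (fmk_self hpos b)]
    · intro j hj hne
      rw [if_neg]
      intro h
      have := congrArg Fin.val h
      simp only [Finset.mem_Ico] at hj
      rw [fmk_val hpos (by omega)] at this
      omega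
  · rw [if_neg hb']
    apply Finset.sum_eq_zero
    intro j hj
    simp only [Finset.mem_Ico] at hj
    rw [if_neg]
    intro h
    have := congrArg Fin.val h
    rw [fmk_val hpos (by omega)] at this
    omega

lemma collapse_const (hn : 4 ≤ n) (hpos : 0 < n) {m : ℕ} (hm : m = (n - 1) / 2)
    (a : Fin n) (g : ℕ → ℂ) :
    (∑ j ∈ Finset.Ico (m + 1) n, if fmk n hpos m = a then g j else 0)
      = if a.val = m then ∑ j ∈ Finset.Ico (m + 1) n, g j else 0 := by
  have hcond : (fmk n hpos m = a) ↔ a.val = m := by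
    constructor
    · intro h
      have := congrArg Fin.val h
      rw [fmk_val hpos (by omega)] at this
      omega
    · intro h
      apply Fin.ext
      rw [fmk_val hpos (by omega)]
      omega
  by_cases h : a.val = m
  · rw [if_pos h]
    apply Finset.sum_congr rfl
    intro j _
    rw [if_pos (hcond.mpr h)]
  · rw [if_neg h]
    apply Finset.sum_eq_zero
    intro j _
    rw [if_neg (fun hc => h (hcond.mp hc))]

lemma bracket_eval (hn : 4 ≤ n) (hpos : 0 < n) {m : ℕ} (hm : m = (n - 1) / 2)
    {S : Finset (Fin n × Fin n)}
    (hS' : S = ((Finset.range m).image fun i => (fmk n hpos i, fmk n hpos (n - 1 - i))) ∪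
      ((Finset.Ico (m + 1) n).image fun j => (fmk n hpos m, fmk n hpos j)))
    (x : M n) (a b : Fin n) :
    FS S ⁅x, Matrix.single a b (1 : ℂ)⁆ =
      ((if n - m ≤ b.val then x (fmk n hpos (n - 1 - b.val)) a else 0) +
       (if m + 1 ≤ b.val then x (fmk n hpos m) a else 0)) -
      ((if a.val < m then x b (fmk n hpos (n - 1 - a.val)) else 0) +
       (if a.val = m then ∑ j ∈ Finset.Ico (m + 1) n, x b (fmk n hpos j) else 0)) := by
  have hlie : ⁅x, Matrix.single a b (1 : ℂ)⁆
      = x * Matrix.single a b (1 : ℂ) - Matrix.single a b (1 : ℂ) * x :=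
    Ring.lie_def x _
  rw [hlie, map_sub, FS_eval hn hpos hm hS', FS_eval hn hpos hm hS']
  have e1 : ∀ i ∈ Finset.range m,
      (x * Matrix.single a b (1 : ℂ)) (fmk n hpos i) (fmk n hpos (n - 1 - i))
      = if fmk n hpos (n - 1 - i) = b then x (fmk n hpos i) a else 0 :=
    fun i _ => mul_stdE x a b _ _
  have e2 : ∀ j ∈ Finset.Ico (m + 1) n,
      (x * Matrix.single a b (1 : ℂ)) (fmk n hpos m) (fmk n hpos j)
      = if fmk n hpos j = b then x (fmk n hpos m) a else 0 :=
    fun j _ => mul_stdE x a b _ _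
  have e3 : ∀ i ∈ Finset.range m,
      (Matrix.single a b (1 : ℂ) * x) (fmk n hpos i) (fmk n hpos (n - 1 - i))
      = if fmk n hpos i = a then x b (fmk n hpos (n - 1 - i)) else 0 :=
    fun i _ => stdE_mul x a b _ _
  have e4 : ∀ j ∈ Finset.Ico (m + 1) n,
      (Matrix.single a b (1 : ℂ) * x) (fmk n hpos m) (fmk n hpos j)
      = if fmk n hpos m = a then x b (fmk n hpos j) else 0 :=
    fun j _ => stdE_mul x a b _ _
  rw [Finset.sum_congr rfl e1, Finset.sum_congr rfl e2, Finset.sum_congr rfl e3,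
    Finset.sum_congr rfl e4, collapse_match hn hpos hm, collapse_star hn hpos hm,
    collapse_low hn hpos hm, collapse_const hn hpos hm]

end Master
section Kernel

open Finset

variable {n : ℕ}

lemma mem_gA {le : Fin n → Fin n → Prop} {A : M n} :
    A ∈ gA le ↔ (Matrix.trace A = 0 ∧ ∀ p q : Fin n, p ≠ q → ¬ le p q → A p q = 0) :=
  Iff.rfl

lemma trace_stdE (a : Fin n) : Matrix.trace (Matrix.single a a (1 : ℂ)) = 1 := by
  rw [Matrix.trace, Finset.sum_eq_single a]
  · simp [Matrix.single, Matrix.diag]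
  · intro p _ hp
    simp only [Matrix.diag_apply]
    unfold Matrix.single
    simp only [Matrix.of_apply]
    rw [if_neg]
    rintro ⟨h, -⟩
    exact hp h.symm
  · intro h; exact absurd (Finset.mem_univ a) h

lemma stdE_mem_gA {m : ℕ} {le : Fin n → Fin n → Prop}
    (hle : ∀ p q : Fin n, le p q ↔ p = q ∨ (p.val < q.val ∧ q.val ≠ m))
    {a b : Fin n} (h1 : a.val < b.val) (h2 : b.val ≠ m) :
    Matrix.single a b (1 : ℂ) ∈ gA le := by
  rw [mem_gA]
  constructor
  · rw [Matrix.trace]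
    apply Finset.sum_eq_zero
    intro p _
    simp only [Matrix.diag_apply]
    unfold Matrix.single
    simp only [Matrix.of_apply]
    rw [if_neg]
    rintro ⟨ha, hb⟩
    rw [← ha] at hb
    rw [← hb] at h1
    omega
  · intro p q _ hnle
    unfold Matrix.single
    simp only [Matrix.of_apply]
    rw [if_neg]
    rintro ⟨ha, hb⟩
    subst ha; subst hb
    exact hnle ((hle a b).mpr (Or.inr ⟨h1, h2⟩))

lemma diagE_mem_gA {le : Fin n → Fin n → Prop} (a b : Fin n) :
    (Matrix.single a a (1 : ℂ) - Matrix.single b b (1 : ℂ)) ∈ gA le := by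
  rw [mem_gA]
  constructor
  · rw [Matrix.trace_sub, trace_stdE, trace_stdE, sub_self]
  · intro p q hne _
    have hz : ∀ c : Fin n, Matrix.single c c (1 : ℂ) p q = 0 := by
      intro c
      unfold Matrix.single
      simp only [Matrix.of_apply]
      rw [if_neg]
      rintro ⟨h1, h2⟩
      exact hne (h1.symm.trans h2)
    simp [Matrix.sub_apply, hz]

lemma kernel_zero (hn : 4 ≤ n) (hpos : 0 < n) {m : ℕ} (hm : m = (n - 1) / 2)
    {le : Fin n → Fin n → Prop}
    (hle : ∀ p q : Fin n, le p q ↔ p = q ∨ (p.val < q.val ∧ q.val ≠ m))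
    {S : Finset (Fin n × Fin n)}
    (hS' : S = ((Finset.range m).image fun i => (fmk n hpos i, fmk n hpos (n - 1 - i))) ∪
      ((Finset.Ico (m + 1) n).image fun j => (fmk n hpos m, fmk n hpos j)))
    (x : M n) (hx : x ∈ gA le) (hker : ∀ y ∈ gA le, FS S ⁅x, y⁆ = 0) : x = 0 := by
  obtain ⟨htr, hsupp⟩ := mem_gA.mp hx
  have hm1 : 1 ≤ m := by omega
  have hmn : m < n := by omega
  have hm2 : 2 * m < n := by omega
  have hnm : n ≤ 2 * m + 2 := by omega
  -- vanishing from membership in gA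
  have hz : ∀ a b : ℕ, a < n → b < n → ¬(a < b ∧ b ≠ m) → a ≠ b →
      x (fmk n hpos a) (fmk n hpos b) = 0 := by
    intro a b ha hb hcond hne
    apply hsupp
    · intro h
      have := congrArg Fin.val h
      rw [fmk_val hpos ha, fmk_val hpos hb] at this
      exact hne this
    · intro hlepq
      rcases (hle _ _).mp hlepq with h | h
      · have := congrArg Fin.val h
        rw [fmk_val hpos ha, fmk_val hpos hb] at this
        exact hne this
      · rw [fmk_val hpos ha, fmk_val hpos hb] at h
        exact hcond h
  -- the master equation
  have EQ : ∀ a b : ℕ, a < n → b < n → a < b → b ≠ m →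
      ((if n - m ≤ b then x (fmk n hpos (n - 1 - b)) (fmk n hpos a) else 0) +
       (if m + 1 ≤ b then x (fmk n hpos m) (fmk n hpos a) else 0)) =
      ((if a < m then x (fmk n hpos b) (fmk n hpos (n - 1 - a)) else 0) +
       (if a = m then ∑ j ∈ Finset.Ico (m + 1) n,
          x (fmk n hpos b) (fmk n hpos j) else 0)) := by
    intro a b ha hb hab hbm
    have hmem := stdE_mem_gA hle (a := fmk n hpos a) (b := fmk n hpos b)
      (by rw [fmk_val hpos ha, fmk_val hpos hb]; exact hab)
      (by rw [fmk_val hpos hb]; exact hbm)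
    have h := hker _ hmem
    rw [bracket_eval hn hpos hm hS', fmk_val hpos ha, fmk_val hpos hb] at h
    exact sub_eq_zero.mp h
  -- Step 1: cross entries above the antidiagonal, rows in the low block
  have S1 : ∀ a b : ℕ, a < b → b < m →
      x (fmk n hpos b) (fmk n hpos (n - 1 - a)) = 0 := by
    intro a b hab hbm'
    have h := EQ a b (by omega) (by omega) hab (by omega)
    rw [if_neg (show ¬ n - m ≤ b by omega), if_neg (show ¬ m + 1 ≤ b by omega),
      if_pos (show a < m by omega), if_neg (show ¬ a = m by omega)] at h
    have := h.symm
    rw [add_zero, zero_add] at this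
    exact this
  -- Step 2: the reflection identity
  have S2 : ∀ a b : ℕ, a < m → n - m ≤ b → b ≤ n - 1 →
      x (fmk n hpos (n - 1 - b)) (fmk n hpos a) =
      x (fmk n hpos b) (fmk n hpos (n - 1 - a)) := by
    intro a b ham hb1 hb2
    have h := EQ a b (by omega) (by omega) (by omega) (by omega)
    rw [if_pos hb1, if_pos (show m + 1 ≤ b by omega), if_pos ham,
      if_neg (show ¬ a = m by omega)] at h
    have hma : x (fmk n hpos m) (fmk n hpos a) = 0 :=
      hz m a (by omega) (by omega) (by omega) (by omega)
    rw [hma, add_zero, add_zero] at h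
    exact h
  -- Step 2a: the low block is strictly lower-triangular-free
  have S2a : ∀ j a : ℕ, j < a → a < m → x (fmk n hpos j) (fmk n hpos a) = 0 := by
    intro j a hja ham
    have h := S2 a (n - 1 - j) ham (by omega) (by omega)
    rw [show n - 1 - (n - 1 - j) = j by omega] at h
    rw [h]
    exact hz (n - 1 - j) (n - 1 - a) (by omega) (by omega) (by omega) (by omega)
  -- Step 2b: diagonal reflection
  have S2b : ∀ a : ℕ, a < m →
      x (fmk n hpos a) (fmk n hpos a) =
      x (fmk n hpos (n - 1 - a)) (fmk n hpos (n - 1 - a)) := by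
    intro a ham
    have h := S2 a (n - 1 - a) ham (by omega) (by omega)
    rw [show n - 1 - (n - 1 - a) = a by omega] at h
    exact h
  -- Step 2c: high block, rows at least n - m
  have S2c : ∀ p q : ℕ, n - m ≤ p → p < q → q ≤ n - 1 →
      x (fmk n hpos p) (fmk n hpos q) = 0 := by
    intro p q hp hpq hq
    have h := S2 (n - 1 - q) p (by omega) hp (by omega)
    rw [show n - 1 - (n - 1 - q) = q by omega] at h
    rw [← h]
    exact hz (n - 1 - p) (n - 1 - q) (by omega) (by omega) (by omega) (by omega)
  -- Step 3: row m+1 in the even case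
  have S3 : m + 1 < n - m → ∀ q : ℕ, m + 2 ≤ q → q ≤ n - 1 →
      x (fmk n hpos (m + 1)) (fmk n hpos q) = 0 := by
    intro hlt q hq1 hq2
    have h := EQ (n - 1 - q) (m + 1) (by omega) (by omega) (by omega) (by omega)
    rw [if_neg (show ¬ n - m ≤ m + 1 by omega), if_pos (le_refl (m + 1)),
      if_pos (show n - 1 - q < m by omega), if_neg (show ¬ n - 1 - q = m by omega)] at h
    have hz1 : x (fmk n hpos m) (fmk n hpos (n - 1 - q)) = 0 :=
      hz m (n - 1 - q) (by omega) (by omega) (by omega) (by omega)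
    rw [hz1, zero_add, add_zero, show n - 1 - (n - 1 - q) = q by omega] at h
    exact h.symm
  -- high block vanishing
  have SHB : ∀ p q : ℕ, m + 1 ≤ p → p < q → q ≤ n - 1 →
      x (fmk n hpos p) (fmk n hpos q) = 0 := by
    intro p q hp hpq hq
    rcases Nat.lt_or_ge p (n - m) with hcase | hcase
    · have hp1 : p = m + 1 := by omega
      subst hp1
      exact S3 (by omega) q (by omega) hq
    · exact S2c p q hcase hpq hq
  -- Step 4: cross entries determined by row m
  have S4 : ∀ a j : ℕ, m + 1 ≤ a → a ≤ n - 2 → j ≤ n - 2 - a →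
      x (fmk n hpos j) (fmk n hpos a) =
      - x (fmk n hpos m) (fmk n hpos a) := by
    intro a j ha1 ha2 hj
    have h := EQ a (n - 1 - j) (by omega) (by omega) (by omega) (by omega)
    rw [if_pos (show n - m ≤ n - 1 - j by omega),
      if_pos (show m + 1 ≤ n - 1 - j by omega),
      if_neg (show ¬ a < m by omega), if_neg (show ¬ a = m by omega),
      show n - 1 - (n - 1 - j) = j by omega] at h
    rw [add_zero] at h
    linear_combination h
  -- Step 5: diagonal entries in the high block
  have S5 : ∀ b : ℕ, m + 1 ≤ b → b ≤ n - 1 →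
      x (fmk n hpos b) (fmk n hpos b) = x (fmk n hpos m) (fmk n hpos m) := by
    intro b hb1 hb2
    have h := EQ m b (by omega) (by omega) (by omega) (by omega)
    rw [if_pos (show m + 1 ≤ b by omega), if_neg (show ¬ m < m by omega),
      if_pos (Eq.refl m), zero_add] at h
    have hfirst : (if n - m ≤ b then x (fmk n hpos (n - 1 - b)) (fmk n hpos m) else 0)
        = 0 := by
      by_cases hc : n - m ≤ b
      · rw [if_pos hc]
        exact hz (n - 1 - b) m (by omega) (by omega) (by omega) (by omega)
      · rw [if_neg hc]
    rw [hfirst, zero_add] at h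
    have hsum : ∑ j ∈ Finset.Ico (m + 1) n, x (fmk n hpos b) (fmk n hpos j)
        = x (fmk n hpos b) (fmk n hpos b) := by
      rw [Finset.sum_eq_single_of_mem b (Finset.mem_Ico.mpr ⟨hb1, by omega⟩)]
      intro j hj hne
      simp only [Finset.mem_Ico] at hj
      rcases Nat.lt_or_ge j b with hlt | hge
      · exact hz b j (by omega) (by omega) (by omega) (by omega)
      · exact SHB b j hb1 (by omega) (by omega)
    rw [hsum] at h
    exact h.symm
  -- all diagonal entries are equal
  have hdiag_eq : ∀ p : ℕ, p < n →
      x (fmk n hpos p) (fmk n hpos p) = x (fmk n hpos m) (fmk n hpos m) := by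
    intro p hp
    rcases Nat.lt_trichotomy p m with hc | hc | hc
    · rw [S2b p hc]
      exact S5 (n - 1 - p) (by omega) (by omega)
    · rw [hc]
    · exact S5 p (by omega) (by omega)
  -- diagonal is zero
  have hxmm : x (fmk n hpos m) (fmk n hpos m) = 0 := by
    have hsum : Matrix.trace x = (n : ℂ) * x (fmk n hpos m) (fmk n hpos m) := by
      rw [Matrix.trace]
      have : ∀ p : Fin n, Matrix.diag x p = x (fmk n hpos m) (fmk n hpos m) := by
        intro p
        have h1 := hdiag_eq p.val p.isLt
        rw [fmk_self hpos p] at h1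
        exact h1
      rw [Finset.sum_congr rfl (fun p _ => this p), Finset.sum_const, Finset.card_univ,
        Fintype.card_fin, nsmul_eq_mul]
    rw [hsum] at htr
    have hne : (n : ℂ) ≠ 0 := Nat.cast_ne_zero.mpr (by omega)
    exact (mul_eq_zero.mp htr).resolve_left hne
  have hdiag0 : ∀ p : ℕ, p < n → x (fmk n hpos p) (fmk n hpos p) = 0 := by
    intro p hp
    rw [hdiag_eq p hp, hxmm]
  -- the diagonal-test function
  set C : ℕ → ℂ := fun a =>
    ((if n - m ≤ a then x (fmk n hpos (n - 1 - a)) (fmk n hpos a) else 0) +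
     (if m + 1 ≤ a then x (fmk n hpos m) (fmk n hpos a) else 0)) -
    ((if a < m then x (fmk n hpos a) (fmk n hpos (n - 1 - a)) else 0) +
     (if a = m then ∑ j ∈ Finset.Ico (m + 1) n,
        x (fmk n hpos a) (fmk n hpos j) else 0)) with hCdef
  have hC : ∀ a b : ℕ, a < n → b < n → C a = C b := by
    intro a b ha hb
    have h := hker _ (diagE_mem_gA (le := le) (fmk n hpos a) (fmk n hpos b))
    rw [Ring.lie_def, mul_sub, sub_mul, sub_sub_sub_comm, map_sub, ← Ring.lie_def, ← Ring.lie_def,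
      bracket_eval hn hpos hm hS', bracket_eval hn hpos hm hS',
      fmk_val hpos ha, fmk_val hpos hb] at h
    have h2 := sub_eq_zero.mp h
    simp only [hCdef]
    exact h2
  have hCj : ∀ j : ℕ, j < m → C j = - x (fmk n hpos j) (fmk n hpos (n - 1 - j)) := by
    intro j hj
    simp only [hCdef]
    rw [if_neg (show ¬ n - m ≤ j by omega), if_neg (show ¬ m + 1 ≤ j by omega),
      if_pos hj, if_neg (show ¬ j = m by omega)]
    ring
  have hCm : C m = - ∑ j ∈ Finset.Ico (m + 1) n,
      x (fmk n hpos m) (fmk n hpos j) := by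
    simp only [hCdef]
    rw [if_neg (show ¬ n - m ≤ m by omega), if_neg (show ¬ m + 1 ≤ m by omega),
      if_neg (show ¬ m < m by omega)]
    simp
  have hCa : ∀ a : ℕ, m + 1 ≤ a → a ≤ n - 1 → C a =
      (if n - m ≤ a then x (fmk n hpos (n - 1 - a)) (fmk n hpos a) else 0) +
      x (fmk n hpos m) (fmk n hpos a) := by
    intro a ha1 ha2
    simp only [hCdef]
    rw [if_pos ha1, if_neg (show ¬ a < m by omega), if_neg (show ¬ a = m by omega)]
    ring
  set lam : ℂ := C 0 with hlamdef
  have ht : ∀ j : ℕ, j < m → x (fmk n hpos j) (fmk n hpos (n - 1 - j)) = - lam := by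
    intro j hj
    have h := hC j 0 (by omega) (by omega)
    rw [hCj j hj] at h
    rw [hlamdef, ← h]
    ring
  have hs2 : ∀ a : ℕ, n - m ≤ a → a ≤ n - 1 →
      x (fmk n hpos m) (fmk n hpos a) = 2 * lam := by
    intro a ha1 ha2
    have h := hC a 0 (by omega) (by omega)
    rw [hCa a (by omega) ha2, if_pos ha1] at h
    have h2 := ht (n - 1 - a) (by omega)
    rw [show n - 1 - (n - 1 - a) = a by omega] at h2
    rw [h2] at h
    rw [← hlamdef] at h
    linear_combination h
  have hs1 : ∀ a : ℕ, m + 1 ≤ a → a < n - m →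
      x (fmk n hpos m) (fmk n hpos a) = lam := by
    intro a ha1 ha2
    have h := hC a 0 (by omega) (by omega)
    rw [hCa a ha1 (by omega), if_neg (show ¬ n - m ≤ a by omega), zero_add] at h
    rw [← hlamdef] at h
    exact h
  have hlam : lam = 0 := by
    have h := hC m 0 (by omega) (by omega)
    rw [hCm, ← hlamdef] at h
    have hsum : ∑ j ∈ Finset.Ico (m + 1) n, x (fmk n hpos m) (fmk n hpos j)
        = ((n - 2 * m - 1 : ℕ) : ℂ) * lam + ((m : ℕ) : ℂ) * (2 * lam) := by
      rw [← Finset.sum_Ico_consecutive _ (show m + 1 ≤ n - m by omega)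
        (show n - m ≤ n by omega)]
      have e1 : ∑ j ∈ Finset.Ico (m + 1) (n - m), x (fmk n hpos m) (fmk n hpos j)
          = ((n - 2 * m - 1 : ℕ) : ℂ) * lam := by
        rw [Finset.sum_congr rfl (fun j hj => by
          simp only [Finset.mem_Ico] at hj
          exact hs1 j hj.1 hj.2), Finset.sum_const, Nat.card_Ico,
          show n - m - (m + 1) = n - 2 * m - 1 by omega, nsmul_eq_mul]
      have e2 : ∑ j ∈ Finset.Ico (n - m) n, x (fmk n hpos m) (fmk n hpos j)
          = ((m : ℕ) : ℂ) * (2 * lam) := by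
        rw [Finset.sum_congr rfl (fun j hj => by
          simp only [Finset.mem_Ico] at hj
          exact hs2 j hj.1 (by omega)), Finset.sum_const, Nat.card_Ico,
          show n - (n - m) = m by omega, nsmul_eq_mul]
      rw [e1, e2]
    rw [hsum] at h
    have hc1 : ((n - 2 * m - 1 : ℕ) : ℂ) = (n : ℂ) - 2 * (m : ℂ) - 1 := by
      rw [show (n - 2 * m - 1 : ℕ) = n - (2 * m + 1) by omega,
        Nat.cast_sub (by omega : 2 * m + 1 ≤ n)]
      push_cast
      ring
    rw [hc1] at h
    have hn0 : (n : ℂ) * lam = 0 := by linear_combination -h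
    have hne : (n : ℂ) ≠ 0 := Nat.cast_ne_zero.mpr (by omega)
    exact (mul_eq_zero.mp hn0).resolve_left hne
  -- conclude x = 0 entrywise
  have hsb0 : ∀ b : ℕ, m + 1 ≤ b → b ≤ n - 1 →
      x (fmk n hpos m) (fmk n hpos b) = 0 := by
    intro b hb1 hb2
    rcases Nat.lt_or_ge b (n - m) with hc | hc
    · rw [hs1 b hb1 hc, hlam]
    · rw [hs2 b hc hb2, hlam]; ring
  ext p q
  simp only [Matrix.zero_apply]
  rcases p with ⟨a, ha⟩
  rcases q with ⟨b, hb⟩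
  rw [show (⟨a, ha⟩ : Fin n) = fmk n hpos a from (Fin.ext (Nat.mod_eq_of_lt ha).symm),
    show (⟨b, hb⟩ : Fin n) = fmk n hpos b from (Fin.ext (Nat.mod_eq_of_lt hb).symm)]
  rcases Nat.lt_trichotomy a b with hab | hab | hab
  · by_cases hbm : b = m
    · exact hz a b ha hb (by omega) (by omega)
    · rcases Nat.lt_or_ge b m with hbm2 | hbm2
      · exact S2a a b hab hbm2
      · -- b ≥ m + 1
        rcases Nat.lt_trichotomy a m with ham | ham | ham
        · rcases Nat.lt_trichotomy b (n - 1 - a) with h1 | h1 | h1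
          · have h4 := S4 b a (by omega) (by omega) (by omega)
            rw [h4, hsb0 b (by omega) (by omega), neg_zero]
          · have h2 := ht a ham
            rw [show n - 1 - a = b by omega] at h2
            rw [h2, hlam, neg_zero]
          · have h1' := S1 (n - 1 - b) a (by omega) ham
            rw [show n - 1 - (n - 1 - b) = b by omega] at h1'
            exact h1'
        · subst ham
          exact hsb0 b (by omega) (by omega)
        · exact SHB a b (by omega) hab (by omega)
  · subst hab
    exact hdiag0 a ha
  · exact hz a b ha hb (by omega) (by omega)

end Kernel
section Spectrum

open Finset

variable {n : ℕ}

/-- The value `t = (n - m - 1)/n`. -/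
def tval (n m : ℕ) : ℂ := ((n - m - 1 : ℕ) : ℂ) / (n : ℂ)

/-- The diagonal of the principal element. -/
def hfun (n m : ℕ) (p : Fin n) : ℂ := if p.val ≤ m then tval n m else tval n m - 1

/-- The principal element. -/
def H0 (n m : ℕ) : M n := Matrix.diagonal (hfun n m)

lemma adE_apply (H A : M n) : adE H A = H * A - A * H := by
  simp [adE, LinearMap.sub_apply, LinearMap.mulLeft_apply, LinearMap.mulRight_apply]

lemma mem_eig_diag (d : Fin n → ℂ) (μ : ℂ) (A : M n) :
    A ∈ Module.End.eigenspace (adE (Matrix.diagonal d)) μ ↔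
      ∀ p q : Fin n, (d p - d q) * A p q = μ * A p q := by
  rw [Module.End.mem_eigenspace_iff]
  constructor
  · intro h p q
    have h2 : (adE (Matrix.diagonal d) A) p q = (μ • A) p q := by rw [h]
    rw [adE_apply, Matrix.sub_apply, Matrix.diagonal_mul, Matrix.mul_diagonal,
      Matrix.smul_apply, smul_eq_mul] at h2
    linear_combination h2
  · intro h
    ext p q
    rw [adE_apply, Matrix.sub_apply, Matrix.diagonal_mul, Matrix.mul_diagonal,
      Matrix.smul_apply, smul_eq_mul]
    linear_combination h p q

lemma hfun_diff (m : ℕ) (p q : Fin n) :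
    hfun n m p - hfun n m q =
      if p.val ≤ m then (if q.val ≤ m then 0 else 1)
      else (if q.val ≤ m then -1 else 0) := by
  unfold hfun
  by_cases hp : p.val ≤ m <;> by_cases hq : q.val ≤ m <;> simp [hp, hq] <;> ring

lemma H0_mem_gA (hn : 4 ≤ n) (hpos : 0 < n) {m : ℕ} (hm : m = (n - 1) / 2)
    {le : Fin n → Fin n → Prop}
    (hle : ∀ p q : Fin n, le p q ↔ p = q ∨ (p.val < q.val ∧ q.val ≠ m)) :
    H0 n m ∈ gA le := by
  rw [mem_gA]
  constructor
  · rw [H0, Matrix.trace_diagonal]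
    unfold hfun
    rw [Finset.sum_ite, Finset.sum_const, Finset.sum_const]
    have hc1 : (Finset.univ.filter fun p : Fin n => p.val ≤ m).card = m + 1 := by
      rw [Finset.filter_congr (fun p _ => show (p.val ≤ m) ↔ (0 ≤ p.val ∧ p.val < m + 1)
        by omega)]
      rw [card_block hpos 0 (m + 1) (by omega)]
      omega
    have hc2 : (Finset.univ.filter fun p : Fin n => ¬ p.val ≤ m).card = n - m - 1 := by
      rw [Finset.filter_congr (fun p _ => show (¬ p.val ≤ m) ↔ (m + 1 ≤ p.val ∧ p.val < n)
        by constructor <;> intro h' <;> [exact ⟨by omega, p.isLt⟩; omega])]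
      rw [card_block hpos (m + 1) n le_rfl]
      omega
    rw [hc1, hc2, nsmul_eq_mul, nsmul_eq_mul]
    have hN : (n : ℂ) ≠ 0 := Nat.cast_ne_zero.mpr (by omega)
    have hcast : ((n - m - 1 : ℕ) : ℂ) = (n : ℂ) - (m : ℂ) - 1 := by
      rw [show (n - m - 1 : ℕ) = n - (m + 1) by omega, Nat.cast_sub (by omega)]
      push_cast
      ring
    rw [tval, hcast]
    field_simp
    push_cast
    ring
  · intro p q hne _
    exact Matrix.diagonal_apply_ne _ (fun h => hne h)

lemma H0_principal (hn : 4 ≤ n) (hpos : 0 < n) {m : ℕ} (hm : m = (n - 1) / 2)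
    {S : Finset (Fin n × Fin n)}
    (hS' : S = ((Finset.range m).image fun i => (fmk n hpos i, fmk n hpos (n - 1 - i))) ∪
      ((Finset.Ico (m + 1) n).image fun j => (fmk n hpos m, fmk n hpos j)))
    (y : M n) : FS S ⁅H0 n m, y⁆ = FS S y := by
  have hmn : m < n := by omega
  have hm2 : 2 * m < n := by omega
  have hlie : ⁅H0 n m, y⁆ = H0 n m * y - y * H0 n m := Ring.lie_def _ _
  rw [hlie, FS_eval hn hpos hm hS', FS_eval hn hpos hm hS' y]
  have key : ∀ p q : Fin n, p.val ≤ m → m + 1 ≤ q.val →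
      (H0 n m * y - y * H0 n m) p q = y p q := by
    intro p q hp hq
    rw [H0, Matrix.sub_apply, Matrix.diagonal_mul, Matrix.mul_diagonal]
    unfold hfun
    rw [if_pos hp, if_neg (by omega)]
    ring
  congr 1
  · apply Finset.sum_congr rfl
    intro i hi
    simp only [Finset.mem_range] at hi
    exact key _ _ (by rw [fmk_val hpos (by omega)]; omega)
      (by rw [fmk_val hpos (by omega)]; omega)
  · apply Finset.sum_congr rfl
    intro j hj
    simp only [Finset.mem_Ico] at hj
    exact key _ _ (by rw [fmk_val hpos (by omega)]) (by rw [fmk_val hpos (by omega)]; omega)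

/-- Predicate for the relations of the poset. -/
def Prelp (n m : ℕ) : Fin n × Fin n → Prop :=
  fun pq => pq.1 = pq.2 ∨ (pq.1.val < pq.2.val ∧ pq.2.val ≠ m)

instance (m : ℕ) : DecidablePred (Prelp n m) :=
  fun pq => inferInstanceAs (Decidable (pq.1 = pq.2 ∨ (pq.1.val < pq.2.val ∧ pq.2.val ≠ m)))

/-- Predicate for the 0-eigenspace positions. -/
def P0p (n m : ℕ) : Fin n × Fin n → Prop :=
  fun pq => pq.1 = pq.2 ∨
    (pq.1.val < pq.2.val ∧ pq.2.val ≠ m ∧ (pq.1.val ≤ m ↔ pq.2.val ≤ m))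

instance (m : ℕ) : DecidablePred (P0p n m) :=
  fun pq => inferInstanceAs (Decidable (pq.1 = pq.2 ∨
    (pq.1.val < pq.2.val ∧ pq.2.val ≠ m ∧ (pq.1.val ≤ m ↔ pq.2.val ≤ m))))

/-- Predicate for the 1-eigenspace positions. -/
def P1p (n m : ℕ) : Fin n × Fin n → Prop :=
  fun pq => pq.1.val ≤ m ∧ m + 1 ≤ pq.2.val

instance (m : ℕ) : DecidablePred (P1p n m) :=
  fun pq => inferInstanceAs (Decidable (pq.1.val ≤ m ∧ m + 1 ≤ pq.2.val))

lemma Prelp_iff {m : ℕ} (p q : Fin n) :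
    Prelp n m (p, q) ↔ (p = q ∨ (p.val < q.val ∧ q.val ≠ m)) := Iff.rfl

lemma P0p_iff {m : ℕ} (p q : Fin n) :
    P0p n m (p, q) ↔ (p = q ∨
      (p.val < q.val ∧ q.val ≠ m ∧ (p.val ≤ m ↔ q.val ≤ m))) := Iff.rfl

lemma P1p_iff {m : ℕ} (p q : Fin n) :
    P1p n m (p, q) ↔ (p.val ≤ m ∧ m + 1 ≤ q.val) := Iff.rfl

lemma gA_eq_supp {m : ℕ} {le : Fin n → Fin n → Prop}
    (hle : ∀ p q : Fin n, le p q ↔ p = q ∨ (p.val < q.val ∧ q.val ≠ m)) :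
    gA le = suppMod n (Prelp n m) ⊓
      LinearMap.ker (Matrix.traceLinearMap (Fin n) ℂ ℂ) := by
  ext A
  rw [mem_gA, Submodule.mem_inf, mem_suppMod, LinearMap.mem_ker]
  have htr : (Matrix.traceLinearMap (Fin n) ℂ ℂ) A = Matrix.trace A := rfl
  rw [htr]
  constructor
  · rintro ⟨h1, h2⟩
    refine ⟨?_, h1⟩
    intro p q hnp
    rw [Prelp_iff] at hnp
    push_neg at hnp
    exact h2 p q hnp.1 (fun hc => by
      rcases (hle p q).mp hc with h | h
      · exact hnp.1 h
      · exact h.2 (hnp.2 h.1))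
  · rintro ⟨h1, h2⟩
    refine ⟨h2, ?_⟩
    intro p q hne hnle
    apply h1
    rw [Prelp_iff]
    rintro (h | h)
    · exact hne h
    · exact hnle ((hle p q).mpr (Or.inr h))

lemma eig1_eq (hn : 4 ≤ n) {m : ℕ} (hm : m = (n - 1) / 2)
    {le : Fin n → Fin n → Prop}
    (hle : ∀ p q : Fin n, le p q ↔ p = q ∨ (p.val < q.val ∧ q.val ≠ m)) :
    gA le ⊓ Module.End.eigenspace (adE (H0 n m)) 1 = suppMod n (P1p n m) := by
  have hsolve : ∀ (c μ z : ℂ), c * z = μ * z → c ≠ μ → z = 0 := by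
    intro c μ z h hne
    have h2 : (c - μ) * z = 0 := by linear_combination h
    rcases mul_eq_zero.mp h2 with h3 | h3
    · exact absurd (by linear_combination h3) hne
    · exact h3
  ext A
  rw [Submodule.mem_inf, mem_gA, H0, mem_eig_diag, mem_suppMod]
  constructor
  · rintro ⟨⟨-, hsupp⟩, heig⟩
    intro p q hnp
    rw [P1p_iff] at hnp
    have h := heig p q
    rw [hfun_diff] at h
    by_cases hp : p.val ≤ m <;> by_cases hq : q.val ≤ m
    · rw [if_pos hp, if_pos hq] at h
      exact hsolve _ _ _ h (by norm_num)
    · exact absurd ⟨hp, by omega⟩ hnp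
    · rw [if_neg hp, if_pos hq] at h
      exact hsolve _ _ _ h (by norm_num)
    · rw [if_neg hp, if_neg hq] at h
      exact hsolve _ _ _ h (by norm_num)
  · intro hsupp
    have hdiag0 : ∀ p : Fin n, A p p = 0 := by
      intro p
      apply hsupp
      rw [P1p_iff]
      rintro ⟨h1, h2⟩
      omega
    refine ⟨⟨?_, ?_⟩, ?_⟩
    · rw [Matrix.trace]
      exact Finset.sum_eq_zero fun p _ => hdiag0 p
    · intro p q hne hnle
      apply hsupp
      rw [P1p_iff]
      rintro ⟨h1, h2⟩
      exact hnle ((hle p q).mpr (Or.inr ⟨by omega, by omega⟩))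
    · intro p q
      rw [hfun_diff]
      by_cases hP : P1p n m (p, q)
      · obtain ⟨h1, h2⟩ := (P1p_iff p q).mp hP
        rw [if_pos h1, if_neg (by omega)]
      · rw [hsupp p q hP, mul_zero, mul_zero]

lemma eig0_eq (hn : 4 ≤ n) {m : ℕ} (hm : m = (n - 1) / 2)
    {le : Fin n → Fin n → Prop}
    (hle : ∀ p q : Fin n, le p q ↔ p = q ∨ (p.val < q.val ∧ q.val ≠ m)) :
    gA le ⊓ Module.End.eigenspace (adE (H0 n m)) 0 = suppMod n (P0p n m) ⊓
      LinearMap.ker (Matrix.traceLinearMap (Fin n) ℂ ℂ) := by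
  have hsolve : ∀ (c μ z : ℂ), c * z = μ * z → c ≠ μ → z = 0 := by
    intro c μ z h hne
    have h2 : (c - μ) * z = 0 := by linear_combination h
    rcases mul_eq_zero.mp h2 with h3 | h3
    · exact absurd (by linear_combination h3) hne
    · exact h3
  ext A
  rw [Submodule.mem_inf, Submodule.mem_inf, mem_gA, H0, mem_eig_diag, mem_suppMod,
    LinearMap.mem_ker]
  have htr : (Matrix.traceLinearMap (Fin n) ℂ ℂ) A = Matrix.trace A := rfl
  rw [htr]
  constructor
  · rintro ⟨⟨htr0, hsupp⟩, heig⟩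
    refine ⟨?_, htr0⟩
    intro p q hnp
    rw [P0p_iff] at hnp
    have hpq : p ≠ q := fun h => hnp (Or.inl h)
    by_cases hrel : p.val < q.val ∧ q.val ≠ m
    · have hiff : ¬ (p.val ≤ m ↔ q.val ≤ m) := fun h =>
        hnp (Or.inr ⟨hrel.1, hrel.2, h⟩)
      have h := heig p q
      rw [hfun_diff] at h
      by_cases hp : p.val ≤ m <;> by_cases hq : q.val ≤ m
      · exact absurd (iff_of_true hp hq) hiff
      · rw [if_pos hp, if_neg hq] at h
        exact hsolve _ _ _ h (by norm_num)
      · rw [if_neg hp, if_pos hq] at h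
        exact hsolve _ _ _ h (by norm_num)
      · exact absurd (iff_of_false hp hq) hiff
    · exact hsupp p q hpq (fun hc => by
        rcases (hle p q).mp hc with h | h
        · exact hpq h
        · exact hrel h)
  · rintro ⟨hsupp, htr0⟩
    refine ⟨⟨htr0, ?_⟩, ?_⟩
    · intro p q hne hnle
      apply hsupp
      rw [P0p_iff]
      rintro (h | h)
      · exact hne h
      · exact hnle ((hle p q).mpr (Or.inr ⟨h.1, h.2.1⟩))
    · intro p q
      rw [hfun_diff]
      by_cases hP : P0p n m (p, q)
      · rcases (P0p_iff p q).mp hP with h | h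
        · subst h
          by_cases hp : p.val ≤ m <;> simp [hp]
        · obtain ⟨h1, h2, h3⟩ := h
          by_cases hp : p.val ≤ m
          · rw [if_pos hp, if_pos (h3.mp hp)]
          · rw [if_neg hp, if_neg (fun hc => hp (h3.mpr hc))]
      · rw [hsupp p q hP, mul_zero, mul_zero]

end Spectrum
section Final

open Finset

variable {n : ℕ}

lemma card_P1 (hn : 4 ≤ n) (hpos : 0 < n) {m : ℕ} (hm : m = (n - 1) / 2) :
    (Finset.univ.filter (P1p n m)).card = (m + 1) * (n - (m + 1)) := by
  have hiff : ∀ pq : Fin n × Fin n,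
      P1p n m pq ↔ (pq.1.val < m + 1 ∧ m + 1 ≤ pq.2.val) := by
    intro pq
    unfold P1p
    omega
  rw [Finset.filter_congr (fun pq _ => hiff pq), card_cross (m + 1) (m + 1) (by omega) (by omega)]

lemma card_diag (hpos : 0 < n) :
    (Finset.univ.filter fun pq : Fin n × Fin n => pq.1 = pq.2).card = n := by
  have himg : (Finset.univ.filter fun pq : Fin n × Fin n => pq.1 = pq.2)
      = Finset.univ.image (fun p : Fin n => (p, p)) := by
    ext pq
    simp only [Finset.mem_filter, Finset.mem_univ, true_and, Finset.mem_image]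
    constructor
    · intro h
      exact ⟨pq.1, Prod.ext rfl h⟩
    · rintro ⟨p, rfl⟩
      rfl
  rw [himg, Finset.card_image_of_injective _ (fun p q h => (Prod.ext_iff.mp h).1),
    Finset.card_univ, Fintype.card_fin]

lemma card_split (hn : 4 ≤ n) (hpos : 0 < n) {m : ℕ} (hm : m = (n - 1) / 2) :
    (Finset.univ.filter (Prelp n m)).card =
      (Finset.univ.filter (P0p n m)).card + (Finset.univ.filter (P1p n m)).card := by
  have hun : Finset.univ.filter (Prelp n m)
      = Finset.univ.filter (P0p n m) ∪ Finset.univ.filter (P1p n m) := by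
    ext pq
    simp only [Finset.mem_union, Finset.mem_filter, Finset.mem_univ, true_and]
    unfold Prelp P0p P1p
    rw [Fin.ext_iff]
    omega
  have hdisj : Disjoint (Finset.univ.filter (P0p n m)) (Finset.univ.filter (P1p n m)) := by
    rw [Finset.disjoint_left]
    intro pq h0 h1
    simp only [Finset.mem_filter, Finset.mem_univ, true_and] at h0 h1
    unfold P0p at h0
    unfold P1p at h1
    rw [Fin.ext_iff] at h0
    omega
  rw [hun, Finset.card_union_of_disjoint hdisj]

lemma card_P0_split (hn : 4 ≤ n) (hpos : 0 < n) {m : ℕ} (hm : m = (n - 1) / 2) :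
    (Finset.univ.filter (P0p n m)).card =
      n + (Finset.univ.filter fun pq : Fin n × Fin n =>
            0 ≤ pq.1.val ∧ pq.1.val < pq.2.val ∧ pq.2.val < m).card
        + (Finset.univ.filter fun pq : Fin n × Fin n =>
            m + 1 ≤ pq.1.val ∧ pq.1.val < pq.2.val ∧ pq.2.val < n).card := by
  have hun : Finset.univ.filter (P0p n m)
      = (Finset.univ.filter fun pq : Fin n × Fin n => pq.1 = pq.2)
        ∪ ((Finset.univ.filter fun pq : Fin n × Fin n =>
            0 ≤ pq.1.val ∧ pq.1.val < pq.2.val ∧ pq.2.val < m)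
          ∪ (Finset.univ.filter fun pq : Fin n × Fin n =>
            m + 1 ≤ pq.1.val ∧ pq.1.val < pq.2.val ∧ pq.2.val < n)) := by
    ext pq
    have h2 := pq.2.isLt
    simp only [Finset.mem_union, Finset.mem_filter, Finset.mem_univ, true_and]
    unfold P0p
    rw [Fin.ext_iff]
    omega
  have hd1 : Disjoint
      (Finset.univ.filter fun pq : Fin n × Fin n =>
        0 ≤ pq.1.val ∧ pq.1.val < pq.2.val ∧ pq.2.val < m)
      (Finset.univ.filter fun pq : Fin n × Fin n =>
        m + 1 ≤ pq.1.val ∧ pq.1.val < pq.2.val ∧ pq.2.val < n) := by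
    rw [Finset.disjoint_left]
    intro pq h0 h1
    simp only [Finset.mem_filter, Finset.mem_univ, true_and] at h0 h1
    omega
  have hd2 : Disjoint
      (Finset.univ.filter fun pq : Fin n × Fin n => pq.1 = pq.2)
      ((Finset.univ.filter fun pq : Fin n × Fin n =>
          0 ≤ pq.1.val ∧ pq.1.val < pq.2.val ∧ pq.2.val < m)
        ∪ (Finset.univ.filter fun pq : Fin n × Fin n =>
          m + 1 ≤ pq.1.val ∧ pq.1.val < pq.2.val ∧ pq.2.val < n)) := by
    rw [Finset.disjoint_left]
    intro pq h0 h1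
    simp only [Finset.mem_union, Finset.mem_filter, Finset.mem_univ, true_and] at h0 h1
    rw [Fin.ext_iff] at h0
    omega
  rw [hun, Finset.card_union_of_disjoint hd2, Finset.card_union_of_disjoint hd1,
    card_diag hpos, add_assoc]

lemma spectrum_binary (hn : 4 ≤ n) (hpos : 0 < n) {m : ℕ} (hm : m = (n - 1) / 2)
    {le : Fin n → Fin n → Prop}
    (hle : ∀ p q : Fin n, le p q ↔ p = q ∨ (p.val < q.val ∧ q.val ≠ m)) :
    eigMult (gA le) (H0 n m) 0 = eigMult (gA le) (H0 n m) 1 ∧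
    eigMult (gA le) (H0 n m) 0 + eigMult (gA le) (H0 n m) 1
      = Module.finrank ℂ ↥(gA le) := by
  have hd0 : eigMult (gA le) (H0 n m) 0 = (Finset.univ.filter (P0p n m)).card - 1 := by
    unfold eigMult
    rw [eig0_eq hn hm hle, finrank_suppMod_inf_ker_trace _ hpos (fun p => Or.inl rfl)]
  have hd1 : eigMult (gA le) (H0 n m) 1 = (Finset.univ.filter (P1p n m)).card := by
    unfold eigMult
    rw [eig1_eq hn hm hle, finrank_suppMod]
  have hg : Module.finrank ℂ ↥(gA le) = (Finset.univ.filter (Prelp n m)).card - 1 := by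
    rw [gA_eq_supp hle, finrank_suppMod_inf_ker_trace _ hpos (fun p => Or.inl rfl)]
  have hsplit := card_split hn hpos hm
  have hP0pos : 1 ≤ (Finset.univ.filter (P0p n m)).card := by
    rw [Nat.one_le_iff_ne_zero, ← Nat.pos_iff_ne_zero, Finset.card_pos]
    exact ⟨((⟨0, hpos⟩ : Fin n), (⟨0, hpos⟩ : Fin n)),
      Finset.mem_filter.mpr ⟨Finset.mem_univ _, Or.inl rfl⟩⟩
  have hP1card := card_P1 hn hpos hm
  have hP0split := card_P0_split hn hpos hm
  have hL := card_strict_block hpos 0 m (by omega)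
  have hH := card_strict_block hpos (m + 1) n le_rfl
  constructor
  · rw [hd0, hd1, hP0split, hP1card]
    rcases (by omega : n = 2 * m + 1 ∨ n = 2 * m + 2) with hc | hc
    · have e1 : (n - (m + 1)) * (n - (m + 1)) = m * m := by
        rw [show n - (m + 1) = m by omega]
      have e2 : (m + 1) * (n - (m + 1)) = m * m + m := by
        rw [show n - (m + 1) = m by omega]; ring
      have e3 : (m - 0) * (m - 0) = m * m := by rw [Nat.sub_zero]
      rw [Nat.sub_zero] at hL
      omega
    · have e1 : (n - (m + 1)) * (n - (m + 1)) = m * m + 2 * m + 1 := by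
        rw [show n - (m + 1) = m + 1 by omega]; ring
      have e2 : (m + 1) * (n - (m + 1)) = m * m + 2 * m + 1 := by
        rw [show n - (m + 1) = m + 1 by omega]; ring
      rw [Nat.sub_zero] at hL
      omega
  · rw [hd0, hd1, hg, hsplit]
    omega

end Final
/-- for `n ≥ 4`, the poset `P*_{4,n}` (the chain
`p₁ ≼ ⋯ ≼ p_{⌊(n-1)/2⌋} ≼ p_{⌊(n-1)/2⌋+2} ≼ ⋯ ≼ p_n` together with
`p_{⌊(n-1)/2⌋+1} ≼ p_{⌊(n-1)/2⌋+2}`, elements `pᵢ` indexed as `i - 1 : Fin n`)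
with `F = ∑_{i=1}^{⌊(n-1)/2⌋} E*_{p_i,p_{n+1-i}} + ∑_{i=⌈n/2⌉+1}^{n}
E*_{p_{⌈n/2⌉},p_i}` (degenerate diagonal summand omitted): `F` is Frobenius on
`g_A(P*_{4,n})` and the spectrum is binary. -/
theorem P4nstar_frobenius_binary_spectrum
    (n : ℕ) (hn : 4 ≤ n)
    (le : Fin n → Fin n → Prop)
    (hle : ∀ p q : Fin n, le p q ↔
      p = q ∨ (p.val < q.val ∧ q.val ≠ (n - 1) / 2))
    (S : Finset (Fin n × Fin n))
    (hS : S =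
      ((Finset.Icc 1 ((n - 1) / 2)).image fun i =>
        (fmk n (by omega) (i - 1), fmk n (by omega) (n - i))) ∪
      ((Finset.Icc ((n + 1) / 2 + 1) n).image fun i =>
        (fmk n (by omega) ((n + 1) / 2 - 1), fmk n (by omega) (i - 1)))) :
    IsFrobeniusOn (gA le) (FS S) ∧
    ∀ H : M n, IsPrincipal (gA le) (FS S) H →
      eigMult (gA le) H 0 = eigMult (gA le) H 1 ∧
      eigMult (gA le) H 0 + eigMult (gA le) H 1 = Module.finrank ℂ ↥(gA le) := by
  have hpos : 0 < n := by omega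
  have hS2 : S =
      ((Finset.Icc 1 ((n - 1) / 2)).image fun i =>
        (fmk n hpos (i - 1), fmk n hpos (n - i))) ∪
      ((Finset.Icc ((n + 1) / 2 + 1) n).image fun i =>
        (fmk n hpos ((n + 1) / 2 - 1), fmk n hpos (i - 1))) := hS
  have hS' := S_eq hn hpos rfl hS2
  have hfrob : IsFrobeniusOn (gA le) (FS S) := by
    intro x hx hk
    exact kernel_zero hn hpos rfl hle hS' x hx hk
  refine ⟨hfrob, ?_⟩
  intro H hH
  have hprin0 : IsPrincipal (gA le) (FS S) (H0 n ((n - 1) / 2)) :=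
    ⟨H0_mem_gA hn hpos rfl hle, fun y _ => H0_principal hn hpos rfl hS' y⟩
  have hHeq : H = H0 n ((n - 1) / 2) := by
    have hmem : H - H0 n ((n - 1) / 2) ∈ gA le := Submodule.sub_mem _ hH.1 hprin0.1
    have hk : ∀ y ∈ gA le, FS S ⁅H - H0 n ((n - 1) / 2), y⁆ = 0 := by
      intro y hy
      rw [Ring.lie_def, sub_mul, mul_sub, sub_sub_sub_comm, map_sub, ← Ring.lie_def, ← Ring.lie_def,
        hH.2 y hy, hprin0.2 y hy, sub_self]
    exact sub_eq_zero.mp (hfrob _ hmem hk)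
  rw [hHeq]
  exact spectrum_binary hn hpos rfl hle

end
end LiePosets
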